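/- Let t > 0, let (ν_s)_{s∈[0,t]} be a weakly continuous family of finite Borel measures on ℝ^d, and let n : [0,t] × ℝ^d → [0,∞) be bounded and continuous and such that for every s ∈ [0,t] and every Borel set A ⊆ ℝ^d one has ∫₀^s ν_r(A) dr = ∫_A n(s,x) dx. Then for every continuous compactly supported ψ : ℝ^d → ℝ, ∫_{ℝ^d} (1 − e^{−n(t,x)}) ψ(x) dx = ∫₀^t ( ∫_{ℝ^d} e^{−n(s,x)} ψ(x) ν_s(dx) ) ds. -/

import Mathlib

open MeasureTheory Real Filter
open scoped ENNReal NNReal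

lemma exp_neg_lower (h : ℝ) : 0 ≤ Real.exp (-h) - 1 + h := by
  have := Real.add_one_le_exp (-h); linarith

lemma exp_neg_upper (h : ℝ) (hh : 0 ≤ h) : Real.exp (-h) - 1 + h ≤ h^2/2 := by
  set f : ℝ → ℝ := fun x => x^2/2 - x + 1 - Real.exp (-x) with hf
  have hderiv : ∀ x : ℝ, HasDerivAt f (x - 1 + Real.exp (-x)) x := by
    intro x
    have h1 : HasDerivAt (fun x : ℝ => x^2/2 - x + 1) (x - 1) x := by
      have := ((hasDerivAt_pow 2 x).div_const 2).sub (hasDerivAt_id x)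
      simpa using this.add_const 1
    have h2 : HasDerivAt (fun x : ℝ => Real.exp (-x)) (-Real.exp (-x)) x := by
      exact ((Real.hasDerivAt_exp (-x)).comp x (hasDerivAt_neg x)).congr_deriv (by ring)
    exact (h1.sub h2).congr_deriv (by ring)
  have hmono : MonotoneOn f (Set.Ici 0) := by
    apply monotoneOn_of_deriv_nonneg (convex_Ici 0)
      (Continuous.continuousOn (by fun_prop))
    · intro x hx
      exact (hderiv x).differentiableAt.differentiableWithinAt
    · intro x hx
      rw [(hderiv x).deriv]
      have := Real.add_one_le_exp (-x)
      linarith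
  have := hmono (Set.self_mem_Ici) hh hh
  simp [f] at this
  linarith

lemma exp_neg_abs_le {a b : ℝ} (ha : 0 ≤ a) (hb : 0 ≤ b) :
    |Real.exp (-a) - Real.exp (-b)| ≤ |a - b| := by
  have key : ∀ u v : ℝ, 0 ≤ u → u ≤ v → Real.exp (-u) - Real.exp (-v) ≤ v - u := by
    intro u v hu huv
    have h1 : 1 - (v - u) ≤ Real.exp (-(v - u)) := by
      have := Real.add_one_le_exp (-(v - u)); linarith
    have h2 : Real.exp (-v) = Real.exp (-u) * Real.exp (-(v - u)) := by
      rw [← Real.exp_add]; ring_nf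
    have h3 : Real.exp (-u) ≤ 1 := Real.exp_le_one_iff.mpr (by linarith)
    have h4 : Real.exp (-u) * (1 - (v - u)) ≤ Real.exp (-v) := by
      rw [h2]
      exact mul_le_mul_of_nonneg_left h1 (Real.exp_pos _).le
    nlinarith [Real.exp_pos (-u)]
  rcases le_total a b with hab | hab
  · rw [abs_of_nonneg (by nlinarith [Real.exp_le_exp.mpr (neg_le_neg hab)]),
      abs_of_nonpos (by linarith)]
    have := key a b ha hab; linarith
  · rw [abs_of_nonpos (by nlinarith [Real.exp_le_exp.mpr (neg_le_neg hab)]),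
      abs_of_nonneg (by linarith)]
    have := key b a hb hab; linarith

lemma meas_eval_of_cont {d : ℕ} (νc : ℝ → FiniteMeasure (EuclideanSpace ℝ (Fin d)))
    (hc : Continuous νc) :
    ∀ A : Set (EuclideanSpace ℝ (Fin d)), MeasurableSet A →
      Measurable (fun r => (νc r : Measure (EuclideanSpace ℝ (Fin d))) A) := by
  have hclosed : ∀ F : Set (EuclideanSpace ℝ (Fin d)), IsClosed F →
      Measurable (fun r => (νc r : Measure (EuclideanSpace ℝ (Fin d))) F) := by
    intro F hF
    have usc : UpperSemicontinuous
        (fun r => (νc r : Measure (EuclideanSpace ℝ (Fin d))) F) := by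
      intro r₀ y hy
      have hlim := MeasureTheory.FiniteMeasure.limsup_measure_closed_le_of_tendsto
        (hc.tendsto r₀) hF
      exact Filter.eventually_lt_of_limsup_lt (lt_of_le_of_lt hlim hy)
    exact usc.measurable
  have hmass : Measurable
      (fun r => (νc r : Measure (EuclideanSpace ℝ (Fin d))) Set.univ) := by
    have : Continuous fun r => ((νc r).mass : ℝ≥0∞) :=
      (ENNReal.continuous_coe.comp (FiniteMeasure.continuous_mass.comp hc))
    simpa [FiniteMeasure.ennreal_mass] using this.measurable
  refine MeasurableSet.induction_on_open
    (C := fun A _ => Measurable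
      (fun r => (νc r : Measure (EuclideanSpace ℝ (Fin d))) A)) ?_ ?_ ?_
  · intro U hU
    have h1 : (fun r => (νc r : Measure (EuclideanSpace ℝ (Fin d))) U)
        = fun r => (νc r : Measure (EuclideanSpace ℝ (Fin d))) Set.univ
            - (νc r : Measure (EuclideanSpace ℝ (Fin d))) Uᶜ := by
      funext r
      have := measure_compl (μ := (νc r : Measure (EuclideanSpace ℝ (Fin d))))
        hU.measurableSet.compl (measure_ne_top _ _)
      rw [compl_compl] at this
      exact this
    rw [h1]; exact hmass.sub (hclosed _ (isClosed_compl_iff.mpr hU))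
  · intro s hs ih
    have h1 : (fun r => (νc r : Measure (EuclideanSpace ℝ (Fin d))) sᶜ)
        = fun r => (νc r : Measure (EuclideanSpace ℝ (Fin d))) Set.univ
            - (νc r : Measure (EuclideanSpace ℝ (Fin d))) s := by
      funext r; rw [measure_compl hs (measure_ne_top _ _)]
    rw [h1]; exact hmass.sub ih
  · intro f hdisj hmeas ih
    have h1 : (fun r => (νc r : Measure (EuclideanSpace ℝ (Fin d))) (⋃ i, f i))
        = fun r => ∑' i, (νc r : Measure (EuclideanSpace ℝ (Fin d))) (f i) := by
      funext r; exact measure_iUnion hdisj hmeas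
    rw [h1]; exact Measurable.ennreal_tsum ih

set_option maxHeartbeats 1000000 in
theorem occupation_density_exp_identity (d : ℕ) (t : ℝ) (ht : 0 < t)
    (ν : ℝ → FiniteMeasure (EuclideanSpace ℝ (Fin d)))
    (hν : ContinuousOn ν (Set.Icc 0 t))
    (n : ℝ → EuclideanSpace ℝ (Fin d) → ℝ)
    (hn_nonneg : ∀ s x, 0 ≤ n s x)
    (hn_bdd : ∃ K : ℝ, ∀ s x, n s x ≤ K)
    (hn_cont : ContinuousOn (fun p : ℝ × EuclideanSpace ℝ (Fin d) => n p.1 p.2)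
      (Set.Icc 0 t ×ˢ Set.univ))
    (hdens : ∀ s ∈ Set.Icc (0:ℝ) t, ∀ A : Set (EuclideanSpace ℝ (Fin d)), MeasurableSet A →
      (∫ r in (0:ℝ)..s, ((ν r : Measure (EuclideanSpace ℝ (Fin d))) A).toReal)
        = ∫ x in A, n s x)
    (ψ : EuclideanSpace ℝ (Fin d) → ℝ)
    (hψc : Continuous ψ) (hψs : HasCompactSupport ψ) :
    ∫ x, (1 - Real.exp (-(n t x))) * ψ x
      = ∫ s in (0:ℝ)..t,
          ∫ x, Real.exp (-(n s x)) * ψ x ∂(ν s : Measure (EuclideanSpace ℝ (Fin d))) := by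
  obtain ⟨K, hK⟩ := hn_bdd
  -- clamp
  set c : ℝ → ℝ := fun r => max 0 (min r t) with hc_def
  have hc_cont : Continuous c := by fun_prop
  have hc_mem : ∀ r, c r ∈ Set.Icc 0 t := by
    intro r
    exact ⟨le_max_left _ _, max_le ht.le (min_le_right r t)⟩
  have hc_eq : ∀ r ∈ Set.Icc (0:ℝ) t, c r = r := by
    intro r hr
    simp [c, min_eq_left hr.2, max_eq_right hr.1]
  set νc : ℝ → FiniteMeasure (EuclideanSpace ℝ (Fin d)) := fun r => ν (c r) with hνc_def
  have hνc_cont : Continuous νc := hν.comp_continuous hc_cont hc_mem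
  have hmeasA := meas_eval_of_cont νc hνc_cont
  have hνmeas : Measurable (fun r => (νc r : Measure (EuclideanSpace ℝ (Fin d)))) :=
    Measure.measurable_of_measurable_coe _ (fun A hA => hmeasA A hA)
  have hn_contx : ∀ s ∈ Set.Icc (0:ℝ) t, Continuous (fun x => n s x) := by
    intro s hs
    exact hn_cont.comp_continuous (Continuous.prodMk_right s) (fun x => ⟨hs, Set.mem_univ x⟩)
  -- uniform mass bound
  obtain ⟨r₀, hr₀mem, hr₀⟩ := (isCompact_Icc (a := (0:ℝ)) (b := t)).exists_isMaxOn
    ⟨0, Set.left_mem_Icc.mpr ht.le⟩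
    ((FiniteMeasure.continuous_mass.comp hνc_cont).continuousOn)
  rw [isMaxOn_iff] at hr₀
  set M : ℝ≥0 := (νc r₀).mass with hM_def
  have hc_idem : ∀ r, c (c r) = c r := fun r => hc_eq _ (hc_mem r)
  have hMbound : ∀ r, (νc r : Measure (EuclideanSpace ℝ (Fin d))) Set.univ ≤ (M : ℝ≥0∞) := by
    intro r
    have h1 : (νc (c r)).mass ≤ M := hr₀ (c r) (hc_mem r)
    have h2 : νc (c r) = νc r := by simp only [hνc_def, hc_idem]
    rw [h2] at h1
    rw [← FiniteMeasure.ennreal_mass]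
    exact_mod_cast h1
  -- core measure identity
  have hcore : ∀ σ ∈ Set.Icc (0:ℝ) t,
      (volume : Measure (EuclideanSpace ℝ (Fin d))).withDensity
          (fun x => ENNReal.ofReal (n σ x))
        = Measure.bind (volume.restrict (Set.Ioc 0 σ))
            (fun r => (νc r : Measure (EuclideanSpace ℝ (Fin d)))) := by
    intro σ hσ
    have hbdd : ∀ A : Set (EuclideanSpace ℝ (Fin d)), MeasurableSet A → volume A < ∞ →
        ∫⁻ x in A, ENNReal.ofReal (n σ x)
          = ∫⁻ r in Set.Ioc (0:ℝ) σ, (νc r : Measure (EuclideanSpace ℝ (Fin d))) A := by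
      intro A hA hAfin
      have hres_fin : IsFiniteMeasure ((volume : Measure (EuclideanSpace ℝ (Fin d))).restrict A) :=
        ⟨by rwa [Measure.restrict_apply_univ]⟩
      have hint : Integrable (fun x => n σ x)
          ((volume : Measure (EuclideanSpace ℝ (Fin d))).restrict A) := by
        refine Integrable.mono' (integrable_const K)
          ((hn_contx σ hσ).aestronglyMeasurable) ?_
        filter_upwards with x
        rw [Real.norm_eq_abs, abs_of_nonneg (hn_nonneg σ x)]
        exact hK σ x
      have hreal := hdens σ hσ A hA
      have hcongr : (∫ r in (0:ℝ)..σ, ((ν r : Measure (EuclideanSpace ℝ (Fin d))) A).toReal)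
          = ∫ r in (0:ℝ)..σ, ((νc r : Measure (EuclideanSpace ℝ (Fin d))) A).toReal := by
        apply intervalIntegral.integral_congr
        intro r hr
        rw [Set.uIcc_of_le hσ.1] at hr
        have : c r = r := hc_eq r ⟨hr.1, hr.2.trans hσ.2⟩
        simp only [hνc_def, this]
      rw [hcongr] at hreal
      rw [intervalIntegral.integral_of_le hσ.1] at hreal
      have htoReal : (∫ r in Set.Ioc (0:ℝ) σ,
            ((νc r : Measure (EuclideanSpace ℝ (Fin d))) A).toReal)
          = (∫⁻ r in Set.Ioc (0:ℝ) σ,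
              (νc r : Measure (EuclideanSpace ℝ (Fin d))) A).toReal := by
        apply integral_toReal
        · exact (hmeasA A hA).aemeasurable
        · filter_upwards with r; exact measure_lt_top _ _
      rw [htoReal] at hreal
      have hlhs : (∫ x in A, n σ x)
          = (∫⁻ x in A, ENNReal.ofReal (n σ x)).toReal := by
        apply integral_eq_lintegral_of_nonneg_ae
        · filter_upwards with x; exact hn_nonneg σ x
        · exact (hn_contx σ hσ).aestronglyMeasurable
      rw [hlhs] at hreal
      have hfin1 : (∫⁻ x in A, ENNReal.ofReal (n σ x)) ≠ ∞ := by
        have : (∫⁻ x in A, ENNReal.ofReal (n σ x)) ≤ ENNReal.ofReal K * volume A := by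
          rw [← setLIntegral_const A (ENNReal.ofReal K)]
          exact setLIntegral_mono (by fun_prop) (fun x _ => ENNReal.ofReal_le_ofReal (hK σ x))
        exact (lt_of_le_of_lt this (ENNReal.mul_lt_top ENNReal.ofReal_lt_top hAfin)).ne
      have hfin2 : (∫⁻ r in Set.Ioc (0:ℝ) σ,
          (νc r : Measure (EuclideanSpace ℝ (Fin d))) A) ≠ ∞ := by
        have : (∫⁻ r in Set.Ioc (0:ℝ) σ,
            (νc r : Measure (EuclideanSpace ℝ (Fin d))) A)
            ≤ (M : ℝ≥0∞) * volume (Set.Ioc (0:ℝ) σ) := by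
          rw [← setLIntegral_const (Set.Ioc (0:ℝ) σ) (M : ℝ≥0∞)]
          exact setLIntegral_mono measurable_const
            (fun r _ => le_trans (measure_mono (Set.subset_univ A)) (hMbound r))
        refine (lt_of_le_of_lt this (ENNReal.mul_lt_top ENNReal.coe_lt_top ?_)).ne
        rw [Real.volume_Ioc]; exact ENNReal.ofReal_lt_top
      exact ((ENNReal.toReal_eq_toReal_iff' hfin2 hfin1).mp hreal).symm
    apply Measure.ext
    intro A hA
    set B : ℕ → Set (EuclideanSpace ℝ (Fin d)) := fun k => A ∩ Metric.ball 0 k with hB_def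
    have hBmeas : ∀ k, MeasurableSet (B k) := fun k => hA.inter measurableSet_ball
    have hBmono : Monotone B := by
      intro i j hij
      exact Set.inter_subset_inter_right A (Metric.ball_subset_ball (by exact_mod_cast hij))
    have hBunion : ⋃ k, B k = A := by
      ext x
      simp only [hB_def, Set.mem_iUnion, Set.mem_inter_iff, Metric.mem_ball]
      constructor
      · rintro ⟨k, hk, _⟩; exact hk
      · intro hx
        obtain ⟨k, hk⟩ := exists_nat_gt (dist x 0)
        exact ⟨k, hx, hk⟩
    have hBk : ∀ k,
        ((volume : Measure (EuclideanSpace ℝ (Fin d))).withDensity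
          (fun x => ENNReal.ofReal (n σ x))) (B k)
        = (Measure.bind (volume.restrict (Set.Ioc 0 σ))
            (fun r => (νc r : Measure (EuclideanSpace ℝ (Fin d))))) (B k) := by
      intro k
      rw [withDensity_apply _ (hBmeas k), Measure.bind_apply (hBmeas k) hνmeas.aemeasurable]
      exact hbdd (B k) (hBmeas k)
        (lt_of_le_of_lt (measure_mono Set.inter_subset_right) measure_ball_lt_top)
    calc ((volume : Measure (EuclideanSpace ℝ (Fin d))).withDensity
          (fun x => ENNReal.ofReal (n σ x))) A
        = ⨆ k, ((volume : Measure (EuclideanSpace ℝ (Fin d))).withDensity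
            (fun x => ENNReal.ofReal (n σ x))) (B k) := by
          rw [← hBunion]; exact Directed.measure_iUnion (hBmono.directed_le)
      _ = ⨆ k, (Measure.bind (volume.restrict (Set.Ioc 0 σ))
            (fun r => (νc r : Measure (EuclideanSpace ℝ (Fin d))))) (B k) := by
          exact iSup_congr hBk
      _ = (Measure.bind (volume.restrict (Set.Ioc 0 σ))
            (fun r => (νc r : Measure (EuclideanSpace ℝ (Fin d))))) A := by
          rw [← hBunion]; exact (Directed.measure_iUnion (hBmono.directed_le)).symm
  -- key identity, nonneg version
  have hkey : ∀ σ ∈ Set.Icc (0:ℝ) t,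
      ∀ h : EuclideanSpace ℝ (Fin d) → ℝ, Continuous h → HasCompactSupport h →
        (∀ x, 0 ≤ h x) →
      ∫ x, h x * n σ x = ∫ r in (0:ℝ)..σ,
        ∫ x, h x ∂(νc r : Measure (EuclideanSpace ℝ (Fin d))) := by
    intro σ hσ h hhc hhs hh0
    obtain ⟨C, hC⟩ := hhs.exists_bound_of_continuous hhc
    set g : EuclideanSpace ℝ (Fin d) → ℝ≥0∞ := fun x => ENNReal.ofReal (h x) with hg_def
    have hg : Measurable g := hhc.measurable.ennreal_ofReal
    have hnσmeas : Measurable (fun x => ENNReal.ofReal (n σ x)) :=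
      (hn_contx σ hσ).measurable.ennreal_ofReal
    have hstar : (∫⁻ x, ENNReal.ofReal (n σ x) * g x)
        = ∫⁻ r in Set.Ioc (0:ℝ) σ, ∫⁻ x, g x
            ∂(νc r : Measure (EuclideanSpace ℝ (Fin d))) := by
      have h1 := lintegral_withDensity_eq_lintegral_mul
        (volume : Measure (EuclideanSpace ℝ (Fin d))) hnσmeas hg
      rw [hcore σ hσ] at h1
      rw [Measure.lintegral_bind hνmeas.aemeasurable hg.aemeasurable] at h1
      exact h1.symm
    have hlhs : (∫ x, h x * n σ x) = (∫⁻ x, ENNReal.ofReal (n σ x) * g x).toReal := by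
      rw [integral_eq_lintegral_of_nonneg_ae (f := fun x => h x * n σ x)
        (by filter_upwards with x; exact mul_nonneg (hh0 x) (hn_nonneg σ x))
        ((hhc.mul (hn_contx σ hσ)).aestronglyMeasurable)]
      congr 1
      apply lintegral_congr
      intro x
      rw [ENNReal.ofReal_mul (hh0 x), mul_comm]
    have hinner : ∀ r, (∫ x, h x ∂(νc r : Measure (EuclideanSpace ℝ (Fin d))))
        = (∫⁻ x, g x ∂(νc r : Measure (EuclideanSpace ℝ (Fin d)))).toReal := by
      intro r
      exact integral_eq_lintegral_of_nonneg_ae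
        (by filter_upwards with x; exact hh0 x) hhc.aestronglyMeasurable
    have houter : Measurable (fun r => ∫⁻ x, g x
        ∂(νc r : Measure (EuclideanSpace ℝ (Fin d)))) :=
      (Measure.measurable_lintegral hg).comp hνmeas
    have hfinr : ∀ r, (∫⁻ x, g x ∂(νc r : Measure (EuclideanSpace ℝ (Fin d)))) < ∞ := by
      intro r
      have : (∫⁻ x, g x ∂(νc r : Measure (EuclideanSpace ℝ (Fin d))))
          ≤ ENNReal.ofReal C * (νc r : Measure (EuclideanSpace ℝ (Fin d))) Set.univ := by
        rw [← lintegral_const (ENNReal.ofReal C)]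
        apply lintegral_mono
        intro x
        apply ENNReal.ofReal_le_ofReal
        exact (le_abs_self (h x)).trans ((Real.norm_eq_abs (h x)) ▸ hC x)
      exact lt_of_le_of_lt this (ENNReal.mul_lt_top ENNReal.ofReal_lt_top (measure_lt_top _ _))
    rw [hlhs, hstar, intervalIntegral.integral_of_le hσ.1]
    rw [show (fun r => ∫ x, h x ∂(νc r : Measure (EuclideanSpace ℝ (Fin d))))
      = fun r => (∫⁻ x, g x ∂(νc r : Measure (EuclideanSpace ℝ (Fin d)))).toReal
      from funext hinner]
    rw [integral_toReal (houter.aemeasurable) (by filter_upwards with r; exact hfinr r)]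
  -- continuity of integrals of a fixed test function
  have hcont_int : ∀ h : EuclideanSpace ℝ (Fin d) → ℝ, Continuous h → HasCompactSupport h →
      Continuous (fun r => ∫ x, h x ∂(νc r : Measure (EuclideanSpace ℝ (Fin d)))) := by
    intro h hhc hhs
    obtain ⟨C, hC⟩ := hhs.exists_bound_of_continuous hhc
    set hb : BoundedContinuousFunction (EuclideanSpace ℝ (Fin d)) ℝ :=
      BoundedContinuousFunction.ofNormedAddCommGroup h hhc C hC with hb_def
    rw [continuous_iff_continuousAt]
    intro r₀
    have := (FiniteMeasure.tendsto_iff_forall_integral_tendsto.mp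
      (hνc_cont.tendsto r₀)) hb
    exact this
  -- signed key identity
  have hkey' : ∀ σ ∈ Set.Icc (0:ℝ) t,
      ∀ h : EuclideanSpace ℝ (Fin d) → ℝ, Continuous h → HasCompactSupport h →
      ∫ x, h x * n σ x = ∫ r in (0:ℝ)..σ,
        ∫ x, h x ∂(νc r : Measure (EuclideanSpace ℝ (Fin d))) := by
    intro σ hσ h hhc hhs
    set hp : EuclideanSpace ℝ (Fin d) → ℝ := fun x => max (h x) 0 with hp_def
    set hm : EuclideanSpace ℝ (Fin d) → ℝ := fun x => max (-h x) 0 with hm_def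
    have hpc : Continuous hp := hhc.max continuous_const
    have hmc : Continuous hm := hhc.neg.max continuous_const
    have hps : HasCompactSupport hp := by
      apply hhs.mono
      intro x hx
      simp only [hp_def, Function.mem_support] at hx ⊢
      intro h0; apply hx; simp [h0]
    have hms : HasCompactSupport hm := by
      apply hhs.mono
      intro x hx
      simp only [hm_def, Function.mem_support] at hx ⊢
      intro h0; apply hx; simp [h0]
    have hp0 : ∀ x, 0 ≤ hp x := fun x => le_max_right _ _
    have hm0 : ∀ x, 0 ≤ hm x := fun x => le_max_right _ _
    have hsub : ∀ x, h x = hp x - hm x := by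
      intro x; simp [hp_def, hm_def, max_zero_sub_max_neg_zero_eq_self]
    have e1 := hkey σ hσ hp hpc hps hp0
    have e2 := hkey σ hσ hm hmc hms hm0
    have intp : Integrable (fun x => hp x * n σ x)
        (volume : Measure (EuclideanSpace ℝ (Fin d))) := by
      apply Continuous.integrable_of_hasCompactSupport (hpc.mul (hn_contx σ hσ))
      apply hps.mono
      intro x hx
      simp only [Function.mem_support] at hx ⊢
      intro h0; apply hx; simp [h0]
    have intm : Integrable (fun x => hm x * n σ x)
        (volume : Measure (EuclideanSpace ℝ (Fin d))) := by
      apply Continuous.integrable_of_hasCompactSupport (hmc.mul (hn_contx σ hσ))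
      apply hms.mono
      intro x hx
      simp only [Function.mem_support] at hx ⊢
      intro h0; apply hx; simp [h0]
    have hL : ∫ x, h x * n σ x
        = (∫ x, hp x * n σ x) - ∫ x, hm x * n σ x := by
      rw [← integral_sub intp intm]
      apply integral_congr_ae
      filter_upwards with x
      rw [hsub x]; ring
    have hip : IntervalIntegrable
        (fun r => ∫ x, hp x ∂(νc r : Measure (EuclideanSpace ℝ (Fin d)))) volume 0 σ :=
      (hcont_int hp hpc hps).intervalIntegrable 0 σ
    have him : IntervalIntegrable
        (fun r => ∫ x, hm x ∂(νc r : Measure (EuclideanSpace ℝ (Fin d)))) volume 0 σ :=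
      (hcont_int hm hmc hms).intervalIntegrable 0 σ
    rw [hL, e1, e2, ← intervalIntegral.integral_sub hip him]
    apply intervalIntegral.integral_congr
    intro r hr
    have i1 : Integrable hp (νc r : Measure (EuclideanSpace ℝ (Fin d))) :=
      hpc.integrable_of_hasCompactSupport hps
    have i2 : Integrable hm (νc r : Measure (EuclideanSpace ℝ (Fin d))) :=
      hmc.integrable_of_hasCompactSupport hms
    show (∫ x, hp x ∂(νc r : Measure (EuclideanSpace ℝ (Fin d))))
        - (∫ x, hm x ∂(νc r : Measure (EuclideanSpace ℝ (Fin d))))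
      = ∫ x, h x ∂(νc r : Measure (EuclideanSpace ℝ (Fin d)))
    rw [← integral_sub i1 i2]
    apply integral_congr_ae
    filter_upwards with x
    rw [hsub x]
  -- signed difference version
  have hdiff : ∀ s ∈ Set.Icc (0:ℝ) t, ∀ s' ∈ Set.Icc (0:ℝ) t, s ≤ s' →
      ∀ h : EuclideanSpace ℝ (Fin d) → ℝ, Continuous h → HasCompactSupport h →
      ∫ x, h x * (n s' x - n s x) = ∫ r in s..s',
        ∫ x, h x ∂(νc r : Measure (EuclideanSpace ℝ (Fin d))) := by
    intro s hs s' hs' hss' h hhc hhs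
    have int1 : Integrable (fun x => h x * n s' x)
        (volume : Measure (EuclideanSpace ℝ (Fin d))) := by
      apply Continuous.integrable_of_hasCompactSupport (hhc.mul (hn_contx s' hs'))
      apply hhs.mono
      intro x hx
      simp only [Function.mem_support] at hx ⊢
      intro h0; apply hx; simp [h0]
    have int2 : Integrable (fun x => h x * n s x)
        (volume : Measure (EuclideanSpace ℝ (Fin d))) := by
      apply Continuous.integrable_of_hasCompactSupport (hhc.mul (hn_contx s hs))
      apply hhs.mono
      intro x hx
      simp only [Function.mem_support] at hx ⊢
      intro h0; apply hx; simp [h0]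
    have hL : ∫ x, h x * (n s' x - n s x)
        = (∫ x, h x * n s' x) - ∫ x, h x * n s x := by
      rw [← integral_sub int1 int2]
      apply integral_congr_ae
      filter_upwards with x
      ring
    have hii : ∀ a b : ℝ, IntervalIntegrable
        (fun r => ∫ x, h x ∂(νc r : Measure (EuclideanSpace ℝ (Fin d)))) volume a b :=
      fun a b => (hcont_int h hhc hhs).intervalIntegrable a b
    rw [hL, hkey' s' hs' h hhc hhs, hkey' s hs h hhc hhs]
    exact intervalIntegral.integral_interval_sub_left (hii 0 s') (hii 0 s)
  -- a.e. monotonicity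
  have hmono : ∀ s ∈ Set.Icc (0:ℝ) t, ∀ s' ∈ Set.Icc (0:ℝ) t, s ≤ s' →
      ∀ᵐ x : EuclideanSpace ℝ (Fin d), n s x ≤ n s' x := by
    intro s hs s' hs' hss'
    have hae : (fun x => ENNReal.ofReal (n s x))
        ≤ᵐ[(volume : Measure (EuclideanSpace ℝ (Fin d)))]
          (fun x => ENNReal.ofReal (n s' x)) := by
      apply ae_le_of_forall_setLIntegral_le_of_sigmaFinite
        ((hn_contx s hs).measurable.ennreal_ofReal)
      intro A hA hAfin
      have e1 : (∫⁻ x in A, ENNReal.ofReal (n s x))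
          = ∫⁻ r in Set.Ioc (0:ℝ) s, (νc r : Measure (EuclideanSpace ℝ (Fin d))) A := by
        rw [← withDensity_apply _ hA, hcore s hs, Measure.bind_apply hA hνmeas.aemeasurable]
      have e2 : (∫⁻ x in A, ENNReal.ofReal (n s' x))
          = ∫⁻ r in Set.Ioc (0:ℝ) s', (νc r : Measure (EuclideanSpace ℝ (Fin d))) A := by
        rw [← withDensity_apply _ hA, hcore s' hs', Measure.bind_apply hA hνmeas.aemeasurable]
      rw [e1, e2]
      exact lintegral_mono_set (Set.Ioc_subset_Ioc_right hss')
    filter_upwards [hae] with x hx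
    exact (ENNReal.ofReal_le_ofReal_iff (hn_nonneg s' x)).mp hx
  have hzero : ∀ᵐ x : EuclideanSpace ℝ (Fin d), n 0 x = 0 := by
    have h0 : (∫⁻ x, ENNReal.ofReal (n 0 x) ∂(volume : Measure (EuclideanSpace ℝ (Fin d)))) = 0 := by
      have e1 : (∫⁻ x, ENNReal.ofReal (n 0 x) ∂(volume : Measure (EuclideanSpace ℝ (Fin d))))
          = ((volume : Measure (EuclideanSpace ℝ (Fin d))).withDensity
              (fun x => ENNReal.ofReal (n 0 x))) Set.univ := by
        rw [withDensity_apply _ MeasurableSet.univ, Measure.restrict_univ]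
      rw [e1, hcore 0 (Set.left_mem_Icc.mpr ht.le),
        Measure.bind_apply MeasurableSet.univ hνmeas.aemeasurable]
      simp
    have := (lintegral_eq_zero_iff
      ((hn_contx 0 (Set.left_mem_Icc.mpr ht.le)).measurable.ennreal_ofReal)).mp h0
    filter_upwards [this] with x hx
    simp only [Pi.zero_apply, ENNReal.ofReal_eq_zero] at hx
    exact le_antisymm hx (hn_nonneg 0 x)
  set Φ : ℝ → ℝ := fun s => ∫ x, (1 - Real.exp (-(n s x))) * ψ x with hΦ_def
  set G : ℝ → ℝ := fun s =>
    ∫ x, Real.exp (-(n s x)) * ψ x ∂(νc s : Measure (EuclideanSpace ℝ (Fin d))) with hG_def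
  -- shared preparation for the analytic part
  have hψint : Integrable ψ (volume : Measure (EuclideanSpace ℝ (Fin d))) :=
    hψc.integrable_of_hasCompactSupport hψs
  obtain ⟨Cψ, hCψ⟩ := hψs.exists_bound_of_continuous hψc
  have hCψ0 : 0 ≤ Cψ := le_trans (norm_nonneg _) (hCψ 0)
  set Cint : ℝ := ∫ x, |ψ x| with hCint_def
  have hCint0 : 0 ≤ Cint := integral_nonneg (fun x => abs_nonneg _)
  set Mr : ℝ := (M : ℝ) with hMr_def
  have hMr0 : 0 ≤ Mr := M.coe_nonneg
  have hMr : ∀ r, ((νc r : Measure (EuclideanSpace ℝ (Fin d))) Set.univ).toReal ≤ Mr := by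
    intro r
    rw [hMr_def]
    exact ENNReal.toReal_le_coe_of_le_coe (hMbound r)
  have hψK : ∀ x, x ∉ tsupport ψ → ψ x = 0 := fun x hx => image_eq_zero_of_notMem_tsupport hx
  -- uniform continuity of n on [0,t] × tsupport ψ
  have hunif : ∀ ε > 0, ∃ δ > 0, ∀ s ∈ Set.Icc (0:ℝ) t, ∀ s' ∈ Set.Icc (0:ℝ) t,
      |s' - s| < δ → ∀ x ∈ tsupport ψ, |n s' x - n s x| < ε := by
    intro ε hε
    have hScomp : IsCompact ((Set.Icc (0:ℝ) t) ×ˢ tsupport ψ) := isCompact_Icc.prod hψs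
    have hScont : ContinuousOn (fun p : ℝ × EuclideanSpace ℝ (Fin d) => n p.1 p.2)
        ((Set.Icc (0:ℝ) t) ×ˢ tsupport ψ) :=
      hn_cont.mono (Set.prod_mono_right (Set.subset_univ _))
    have huc := hScomp.uniformContinuousOn_of_continuous hScont
    rw [Metric.uniformContinuousOn_iff] at huc
    obtain ⟨δ, hδ, hδ'⟩ := huc ε hε
    refine ⟨δ, hδ, fun s hs s' hs' hss' x hx => ?_⟩
    have hd : dist ((s', x) : ℝ × EuclideanSpace ℝ (Fin d)) (s, x) < δ := by
      rw [Prod.dist_eq, Real.dist_eq, dist_self]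
      rwa [max_eq_left (abs_nonneg (s' - s))]
    have := hδ' (s', x) ⟨hs', hx⟩ (s, x) ⟨hs, hx⟩ hd
    rwa [Real.dist_eq] at this
  have hint1 : ∀ s ∈ Set.Icc (0:ℝ) t,
      Integrable (fun x => (1 - Real.exp (-(n s x))) * ψ x)
        (volume : Measure (EuclideanSpace ℝ (Fin d))) := by
    intro s hs
    apply Continuous.integrable_of_hasCompactSupport
    · exact (continuous_const.sub ((hn_contx s hs).neg.rexp)).mul hψc
    · apply hψs.mono
      intro x hx
      simp only [Function.mem_support] at hx ⊢
      intro h0; apply hx; simp [h0]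
  have hΦcont : ContinuousOn Φ (Set.Icc 0 t) := by
    intro s₀ hs₀
    rw [Metric.continuousWithinAt_iff]
    intro ε hε
    obtain ⟨δ, hδ, hδ'⟩ := hunif (ε / (Cint + 1)) (by positivity)
    refine ⟨δ, hδ, fun {s} hs hss₀ => ?_⟩
    rw [Real.dist_eq] at hss₀ ⊢
    have hdiffint : Φ s - Φ s₀
        = ∫ x, (Real.exp (-(n s₀ x)) - Real.exp (-(n s x))) * ψ x := by
      rw [hΦ_def]
      simp only
      rw [← integral_sub (hint1 s hs) (hint1 s₀ hs₀)]
      congr 1; funext x; ring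
    rw [hdiffint]
    calc |∫ x, (Real.exp (-(n s₀ x)) - Real.exp (-(n s x))) * ψ x|
        ≤ ∫ x, |(Real.exp (-(n s₀ x)) - Real.exp (-(n s x))) * ψ x| := by
          simpa [Real.norm_eq_abs, abs_mul] using norm_integral_le_integral_norm
            (fun x => (Real.exp (-(n s₀ x)) - Real.exp (-(n s x))) * ψ x)
            (μ := (volume : Measure (EuclideanSpace ℝ (Fin d))))
      _ ≤ ∫ x, (ε / (Cint + 1)) * |ψ x| := by
          apply integral_mono
          · have h3 := (hint1 s hs).sub (hint1 s₀ hs₀)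
            have h4 : Integrable (fun x => (Real.exp (-(n s₀ x)) - Real.exp (-(n s x))) * ψ x)
                (volume : Measure (EuclideanSpace ℝ (Fin d))) := by
              apply h3.congr
              filter_upwards with x
              simp only [Pi.sub_apply]
              ring
            exact h4.abs
          · exact (hψint.abs).const_mul _
          · intro x
            dsimp only
            by_cases hx : x ∈ tsupport ψ
            · rw [abs_mul]
              apply mul_le_mul_of_nonneg_right _ (abs_nonneg _)
              refine le_of_lt (lt_of_le_of_lt
                (exp_neg_abs_le (hn_nonneg s₀ x) (hn_nonneg s x)) ?_)
              rw [abs_sub_comm]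
              exact hδ' s₀ hs₀ s hs hss₀ x hx
            · rw [hψK x hx]
              simp
      _ = (ε / (Cint + 1)) * Cint := by
          rw [integral_const_mul]
      _ < ε := by
          rw [div_mul_eq_mul_div, div_lt_iff₀ (by positivity)]
          nlinarith
  have hfint : ∀ s ∈ Set.Icc (0:ℝ) t, ∀ r : ℝ,
      Integrable (fun x => Real.exp (-(n s x)) * ψ x)
        (νc r : Measure (EuclideanSpace ℝ (Fin d))) := by
    intro s hs r
    apply Continuous.integrable_of_hasCompactSupport
      (((hn_contx s hs).neg.rexp).mul hψc)
    apply hψs.mono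
    intro x hx
    simp only [Function.mem_support] at hx ⊢
    intro h0; apply hx; simp [h0]
  have hfcs : ∀ s ∈ Set.Icc (0:ℝ) t,
      HasCompactSupport (fun x => Real.exp (-(n s x)) * ψ x) := by
    intro s hs
    apply hψs.mono
    intro x hx
    simp only [Function.mem_support] at hx ⊢
    intro h0; apply hx; simp [h0]
  -- pointwise comparison of test functions at two times
  have hfdiff_bound : ∀ ε : ℝ, 0 ≤ ε → ∀ s ∈ Set.Icc (0:ℝ) t, ∀ s' ∈ Set.Icc (0:ℝ) t,
      (∀ x ∈ tsupport ψ, |n s' x - n s x| < ε) → ∀ r : ℝ,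
      |(∫ x, Real.exp (-(n s' x)) * ψ x ∂(νc r : Measure (EuclideanSpace ℝ (Fin d))))
        - ∫ x, Real.exp (-(n s x)) * ψ x ∂(νc r : Measure (EuclideanSpace ℝ (Fin d)))|
        ≤ Cψ * ε * Mr := by
    intro ε hε0 s hs s' hs' hsmall r
    rw [← integral_sub (hfint s' hs' r) (hfint s hs r)]
    calc |∫ x, (Real.exp (-(n s' x)) * ψ x - Real.exp (-(n s x)) * ψ x)
            ∂(νc r : Measure (EuclideanSpace ℝ (Fin d)))|
        ≤ ∫ x, |Real.exp (-(n s' x)) * ψ x - Real.exp (-(n s x)) * ψ x|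
            ∂(νc r : Measure (EuclideanSpace ℝ (Fin d))) := by
          simpa [Real.norm_eq_abs] using norm_integral_le_integral_norm
            (fun x => Real.exp (-(n s' x)) * ψ x - Real.exp (-(n s x)) * ψ x)
            (μ := (νc r : Measure (EuclideanSpace ℝ (Fin d))))
      _ ≤ ∫ _x, Cψ * ε ∂(νc r : Measure (EuclideanSpace ℝ (Fin d))) := by
          apply integral_mono ((hfint s' hs' r).sub (hfint s hs r)).abs
            (integrable_const _)
          intro x
          simp only [Pi.sub_apply]
          by_cases hx : x ∈ tsupport ψ
          · have h1 : |Real.exp (-(n s' x)) * ψ x - Real.exp (-(n s x)) * ψ x|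
                = |Real.exp (-(n s' x)) - Real.exp (-(n s x))| * |ψ x| := by
              rw [← abs_mul]; ring_nf
            rw [h1]
            have h2 : |Real.exp (-(n s' x)) - Real.exp (-(n s x))| ≤ ε :=
              le_of_lt (lt_of_le_of_lt
                (exp_neg_abs_le (hn_nonneg s' x) (hn_nonneg s x)) (hsmall x hx))
            have h3 : |ψ x| ≤ Cψ := (Real.norm_eq_abs (ψ x)) ▸ hCψ x
            calc |Real.exp (-(n s' x)) - Real.exp (-(n s x))| * |ψ x|
                ≤ ε * Cψ := mul_le_mul h2 h3 (abs_nonneg _) hε0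
              _ = Cψ * ε := mul_comm _ _
          · rw [hψK x hx]
            simp [mul_nonneg hCψ0 hε0]
      _ = Cψ * ε * ((νc r : Measure (EuclideanSpace ℝ (Fin d))) Set.univ).toReal := by
          rw [integral_const]
          simp [mul_comm, measureReal_def]
      _ ≤ Cψ * ε * Mr :=
          mul_le_mul_of_nonneg_left (hMr r) (mul_nonneg hCψ0 hε0)
  have hGcont : ContinuousOn G (Set.Icc 0 t) := by
    intro s₀ hs₀
    rw [Metric.continuousWithinAt_iff]
    intro ε hε
    set ε₁ : ℝ := ε / (2 * (Cψ * Mr + 1)) with hε₁_def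
    have hε₁ : 0 < ε₁ := by positivity
    obtain ⟨δ₁, hδ₁, hδ₁'⟩ := hunif ε₁ hε₁
    -- continuity of the integral of the fixed test function against νc r
    have hHc : Continuous (fun r => ∫ x, Real.exp (-(n s₀ x)) * ψ x
        ∂(νc r : Measure (EuclideanSpace ℝ (Fin d)))) :=
      hcont_int _ (((hn_contx s₀ hs₀).neg.rexp).mul hψc) (hfcs s₀ hs₀)
    have hHc' := Metric.continuous_iff.mp hHc s₀ (ε / 2) (by positivity)
    obtain ⟨δ₂, hδ₂, hδ₂'⟩ := hHc'
    refine ⟨min δ₁ δ₂, lt_min hδ₁ hδ₂, fun {s} hs hss₀ => ?_⟩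
    rw [Real.dist_eq] at hss₀
    have hd1 : |s - s₀| < δ₁ := lt_of_lt_of_le hss₀ (min_le_left _ _)
    have hd2 : dist s s₀ < δ₂ := by
      rw [Real.dist_eq]; exact lt_of_lt_of_le hss₀ (min_le_right _ _)
    have hT1 : |G s - (∫ x, Real.exp (-(n s₀ x)) * ψ x
        ∂(νc s : Measure (EuclideanSpace ℝ (Fin d))))| ≤ Cψ * ε₁ * Mr := by
      exact hfdiff_bound ε₁ hε₁.le s₀ hs₀ s hs (fun x hx => hδ₁' s₀ hs₀ s hs hd1 x hx) s
    have hT2 : |(∫ x, Real.exp (-(n s₀ x)) * ψ x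
        ∂(νc s : Measure (EuclideanSpace ℝ (Fin d)))) - G s₀| < ε / 2 := by
      have := hδ₂' s hd2
      rwa [Real.dist_eq] at this
    have hb : Cψ * ε₁ * Mr < ε / 2 := by
      have h0 : (0:ℝ) < 2 * (Cψ * Mr + 1) := by positivity
      have hq : ε₁ * (2 * (Cψ * Mr + 1)) = ε := by
        rw [hε₁_def]; field_simp
      nlinarith [mul_nonneg hCψ0 hMr0, hε₁]
    rw [Real.dist_eq]
    calc |G s - G s₀| ≤ |G s - (∫ x, Real.exp (-(n s₀ x)) * ψ x
          ∂(νc s : Measure (EuclideanSpace ℝ (Fin d))))|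
          + |(∫ x, Real.exp (-(n s₀ x)) * ψ x
            ∂(νc s : Measure (EuclideanSpace ℝ (Fin d)))) - G s₀| := abs_sub_le _ _ _
      _ < ε := by linarith [hT1.trans_lt hb, hT2]
  have hderiv : ∀ s ∈ Set.Ioo (0:ℝ) t, HasDerivWithinAt Φ (G s) (Set.Ioi s) s := by
    intro s hsIoo
    have hsI : s ∈ Set.Icc (0:ℝ) t := ⟨hsIoo.1.le, hsIoo.2.le⟩
    rw [hasDerivWithinAt_iff_tendsto_slope]
    have hsdiff : Set.Ioi s \ {s} = Set.Ioi s :=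
      Set.diff_singleton_eq_self (fun h => lt_irrefl s h)
    rw [hsdiff]
    rw [Metric.tendsto_nhdsWithin_nhds]
    intro ε hε
    set εA : ℝ := ε / (2 * (Cψ * Mr + 1)) with hεA_def
    have hεA : 0 < εA := by positivity
    obtain ⟨δ₁, hδ₁, hδ₁'⟩ := hunif εA hεA
    set f : EuclideanSpace ℝ (Fin d) → ℝ := fun x => Real.exp (-(n s x)) * ψ x with hf_def
    have hfc : Continuous f := ((hn_contx s hsI).neg.rexp).mul hψc
    have hfs : HasCompactSupport f := hfcs s hsI
    set H : ℝ → ℝ := fun r =>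
      ∫ x, f x ∂(νc r : Measure (EuclideanSpace ℝ (Fin d))) with hH_def
    have hHc : Continuous H := hcont_int f hfc hfs
    obtain ⟨δ₂, hδ₂, hδ₂'⟩ := Metric.continuous_iff.mp hHc s (ε / 4) (by positivity)
    refine ⟨min (min δ₁ δ₂) (t - s), by
      simp only [gt_iff_lt, lt_min_iff]
      exact ⟨⟨hδ₁, hδ₂⟩, sub_pos.mpr hsIoo.2⟩, fun {s'} hs' hd => ?_⟩
    rw [Real.dist_eq] at hd
    have hss' : s < s' := hs'
    have hd₁ : |s' - s| < δ₁ := lt_of_lt_of_le hd ((min_le_left _ _).trans (min_le_left _ _))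
    have hd₂ : |s' - s| < δ₂ := lt_of_lt_of_le hd ((min_le_left _ _).trans (min_le_right _ _))
    have hdt : s' < t := by
      have := lt_of_lt_of_le hd (min_le_right _ _)
      rw [abs_of_pos (sub_pos.mpr hss')] at this
      linarith
    have hs'I : s' ∈ Set.Icc (0:ℝ) t := ⟨hsIoo.1.le.trans hss'.le, hdt.le⟩
    -- test-function difference identity
    have hA := hdiff s hsI s' hs'I hss'.le f hfc hfs
    -- |psi| version
    have hpsiabs_c : Continuous (fun x => |ψ x|) := hψc.abs
    have hpsiabs_s : HasCompactSupport (fun x => |ψ x|) := by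
      apply hψs.mono
      intro x hx
      simp only [Function.mem_support] at hx ⊢
      intro h0; apply hx; simp [h0]
    have hB := hdiff s hsI s' hs'I hss'.le (fun x => |ψ x|) hpsiabs_c hpsiabs_s
    -- bound the |psi| version
    have hQ : (∫ x, |ψ x| * (n s' x - n s x)) ≤ Cψ * Mr * (s' - s) := by
      rw [hB]
      have hbound : ∀ r ∈ Set.uIoc s s',
          ‖∫ x, |ψ x| ∂(νc r : Measure (EuclideanSpace ℝ (Fin d)))‖ ≤ Cψ * Mr := by
        intro r _
        rw [Real.norm_eq_abs, abs_of_nonneg (integral_nonneg (fun x => abs_nonneg _))]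
        calc (∫ x, |ψ x| ∂(νc r : Measure (EuclideanSpace ℝ (Fin d))))
            ≤ ∫ _x, Cψ ∂(νc r : Measure (EuclideanSpace ℝ (Fin d))) := by
              apply integral_mono (hpsiabs_c.integrable_of_hasCompactSupport hpsiabs_s)
                (integrable_const _)
              intro x
              dsimp only
              rw [← Real.norm_eq_abs]
              exact hCψ x
          _ = ((νc r : Measure (EuclideanSpace ℝ (Fin d))) Set.univ).toReal * Cψ := by
              rw [integral_const, smul_eq_mul, measureReal_def]
          _ ≤ Mr * Cψ := mul_le_mul_of_nonneg_right (hMr r) hCψ0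
          _ = Cψ * Mr := mul_comm _ _
      have := intervalIntegral.norm_integral_le_of_norm_le_const hbound
      rw [Real.norm_eq_abs] at this
      have h2 := (le_abs_self _).trans this
      rwa [abs_of_pos (sub_pos.mpr hss'), mul_comm (Cψ * Mr) (s' - s), mul_comm (s' - s)] at h2
    -- the main error estimate
    have hint2 : Integrable (fun x => f x * (n s' x - n s x))
        (volume : Measure (EuclideanSpace ℝ (Fin d))) := by
      apply Continuous.integrable_of_hasCompactSupport
        (hfc.mul ((hn_contx s' hs'I).sub (hn_contx s hsI)))
      apply hfs.mono
      intro x hx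
      simp only [Function.mem_support] at hx ⊢
      intro h0; apply hx; simp [h0]
    have hΦdelta : Φ s' - Φ s = ∫ x, (Real.exp (-(n s x)) - Real.exp (-(n s' x))) * ψ x := by
      show (∫ x, (1 - Real.exp (-(n s' x))) * ψ x)
          - (∫ x, (1 - Real.exp (-(n s x))) * ψ x)
        = ∫ x, (Real.exp (-(n s x)) - Real.exp (-(n s' x))) * ψ x
      rw [← integral_sub (hint1 s' hs'I) (hint1 s hsI)]
      apply integral_congr_ae
      filter_upwards with x
      first
      | (simp only [Pi.sub_apply]; ring)
      | ring
    have hE : |Φ s' - Φ s - ∫ x, f x * (n s' x - n s x)|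
        ≤ (εA / 2) * ∫ x, |ψ x| * (n s' x - n s x) := by
      rw [hΦdelta]
      have hEdiff : (∫ x, (Real.exp (-(n s x)) - Real.exp (-(n s' x))) * ψ x)
            - (∫ x, f x * (n s' x - n s x))
          = ∫ x, ((Real.exp (-(n s x)) - Real.exp (-(n s' x)))
              - Real.exp (-(n s x)) * (n s' x - n s x)) * ψ x := by
        have h3 := (hint1 s' hs'I).sub (hint1 s hsI)
        have h4 : Integrable (fun x => (Real.exp (-(n s x)) - Real.exp (-(n s' x))) * ψ x)
            (volume : Measure (EuclideanSpace ℝ (Fin d))) := by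
          apply h3.congr
          filter_upwards with x
          simp only [Pi.sub_apply]
          ring
        rw [← integral_sub h4 hint2]
        apply integral_congr_ae
        filter_upwards with x
        simp only [Pi.sub_apply, hf_def]
        ring
      rw [hEdiff]
      calc |∫ x, ((Real.exp (-(n s x)) - Real.exp (-(n s' x)))
              - Real.exp (-(n s x)) * (n s' x - n s x)) * ψ x|
          ≤ ∫ x, |((Real.exp (-(n s x)) - Real.exp (-(n s' x)))
              - Real.exp (-(n s x)) * (n s' x - n s x)) * ψ x| := by
            simpa [Real.norm_eq_abs, abs_mul] using norm_integral_le_integral_norm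
              (fun x => ((Real.exp (-(n s x)) - Real.exp (-(n s' x)))
                - Real.exp (-(n s x)) * (n s' x - n s x)) * ψ x)
              (μ := (volume : Measure (EuclideanSpace ℝ (Fin d))))
        _ ≤ ∫ x, (εA / 2) * (|ψ x| * (n s' x - n s x)) := by
            apply integral_mono_ae
            · have hcont5 : Continuous (fun x => ((Real.exp (-(n s x)) - Real.exp (-(n s' x)))
                  - Real.exp (-(n s x)) * (n s' x - n s x)) * ψ x) := by
                apply Continuous.mul _ hψc
                exact ((((hn_contx s hsI).neg.rexp).sub ((hn_contx s' hs'I).neg.rexp)).sub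
                  (((hn_contx s hsI).neg.rexp).mul
                    ((hn_contx s' hs'I).sub (hn_contx s hsI))))
              apply Integrable.abs
              apply Continuous.integrable_of_hasCompactSupport hcont5
              apply hψs.mono
              intro x hx
              simp only [Function.mem_support] at hx ⊢
              intro h0; apply hx; simp [h0]
            · have : Integrable (fun x => |ψ x| * (n s' x - n s x))
                  (volume : Measure (EuclideanSpace ℝ (Fin d))) := by
                apply Continuous.integrable_of_hasCompactSupport
                  (hpsiabs_c.mul ((hn_contx s' hs'I).sub (hn_contx s hsI)))
                apply hpsiabs_s.mono
                intro x hx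
                simp only [Function.mem_support] at hx ⊢
                intro h0; apply hx; simp [h0]
              exact this.const_mul _
            · filter_upwards [hmono s hsI s' hs'I hss'.le] with x hx
              by_cases hxK : x ∈ tsupport ψ
              · set a := n s x with ha_def
                set b := n s' x with hb_def
                have hab : a ≤ b := hx
                have hh0 : 0 ≤ b - a := by linarith
                have hhlt : b - a < εA := by
                  have := hδ₁' s hsI s' hs'I hd₁ x hxK
                  rwa [abs_of_nonneg hh0] at this
                have hexp2 : Real.exp (-b) = Real.exp (-a) * Real.exp (-(b - a)) := by
                  rw [← Real.exp_add]; ring_nf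
                have hbr : |(Real.exp (-a) - Real.exp (-b)) - Real.exp (-a) * (b - a)|
                    ≤ (b - a)^2 / 2 := by
                  have h5 : (Real.exp (-a) - Real.exp (-b)) - Real.exp (-a) * (b - a)
                      = -(Real.exp (-a) * (Real.exp (-(b - a)) - 1 + (b - a))) := by
                    rw [hexp2]; ring
                  rw [h5, abs_neg, abs_of_nonneg (mul_nonneg (Real.exp_pos _).le
                    (exp_neg_lower _))]
                  have h6 := exp_neg_upper (b - a) hh0
                  have h7 : Real.exp (-a) ≤ 1 :=
                    Real.exp_le_one_iff.mpr (by simp [ha_def]; exact hn_nonneg s x)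
                  nlinarith [exp_neg_lower (b - a)]
                rw [abs_mul]
                calc |(Real.exp (-a) - Real.exp (-b)) - Real.exp (-a) * (b - a)| * |ψ x|
                    ≤ ((b - a)^2 / 2) * |ψ x| :=
                      mul_le_mul_of_nonneg_right hbr (abs_nonneg _)
                  _ ≤ (εA / 2) * (|ψ x| * (b - a)) := by
                      have : (b - a)^2 / 2 ≤ (εA / 2) * (b - a) := by nlinarith
                      calc ((b - a)^2 / 2) * |ψ x| ≤ ((εA / 2) * (b - a)) * |ψ x| :=
                            mul_le_mul_of_nonneg_right this (abs_nonneg _)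
                        _ = (εA / 2) * (|ψ x| * (b - a)) := by ring
              · rw [hψK x hxK]
                simp only [abs_zero, mul_zero, zero_mul, abs_zero]
                positivity
        _ = (εA / 2) * ∫ x, |ψ x| * (n s' x - n s x) := integral_const_mul _ _
    -- averaging estimate
    have hHest : |(∫ r in s..s', H r) - (s' - s) * H s| ≤ (ε / 4) * (s' - s) := by
      have hHii : ∀ a b : ℝ, IntervalIntegrable H volume a b :=
        fun a b => hHc.intervalIntegrable a b
      have hconst : (∫ r in s..s', H s) = (s' - s) * H s := by
        rw [intervalIntegral.integral_const, smul_eq_mul]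
      rw [← hconst, ← intervalIntegral.integral_sub (hHii s s')
        ((continuous_const (y := H s)).intervalIntegrable s s')]
      have hbound : ∀ r ∈ Set.uIoc s s', ‖H r - H s‖ ≤ ε / 4 := by
        intro r hr
        rw [Set.uIoc_of_le hss'.le] at hr
        have hdr : dist r s < δ₂ := by
          rw [Real.dist_eq, abs_of_pos (sub_pos.mpr hr.1)]
          have : |s' - s| = s' - s := abs_of_pos (sub_pos.mpr hss')
          rw [this] at hd₂
          linarith [hr.2]
        have := hδ₂' r hdr
        rw [Real.dist_eq] at this
        rw [Real.norm_eq_abs]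
        exact this.le
      have := intervalIntegral.norm_integral_le_of_norm_le_const hbound
      rw [Real.norm_eq_abs, abs_of_pos (sub_pos.mpr hss')] at this
      linarith [this]
    -- put things together
    have hnum : |Φ s' - Φ s - (s' - s) * G s|
        ≤ ((εA / 2) * (Cψ * Mr) + ε / 4) * (s' - s) := by
      have hGs : G s = H s := rfl
      have h8 : Φ s' - Φ s - (s' - s) * G s
          = (Φ s' - Φ s - ∫ x, f x * (n s' x - n s x))
            + ((∫ r in s..s', H r) - (s' - s) * H s) := by
        rw [hGs, hA]; ring
      rw [h8]
      calc |(Φ s' - Φ s - ∫ x, f x * (n s' x - n s x))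
            + ((∫ r in s..s', H r) - (s' - s) * H s)|
          ≤ |Φ s' - Φ s - ∫ x, f x * (n s' x - n s x)|
            + |(∫ r in s..s', H r) - (s' - s) * H s| := abs_add_le _ _
        _ ≤ (εA / 2) * (Cψ * Mr * (s' - s)) + (ε / 4) * (s' - s) := by
            have h9 : (εA / 2) * (∫ x, |ψ x| * (n s' x - n s x))
                ≤ (εA / 2) * (Cψ * Mr * (s' - s)) :=
              mul_le_mul_of_nonneg_left hQ (by positivity)
            linarith [hE.trans h9, hHest]
        _ = ((εA / 2) * (Cψ * Mr) + ε / 4) * (s' - s) := by ring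
    have hslope : slope Φ s s' = (Φ s' - Φ s) / (s' - s) := by
      rw [slope_def_field]
    rw [Real.dist_eq, hslope]
    have hpos : (0:ℝ) < s' - s := sub_pos.mpr hss'
    have h10 : (Φ s' - Φ s) / (s' - s) - G s
        = (Φ s' - Φ s - (s' - s) * G s) / (s' - s) := by
      field_simp
    rw [h10, abs_div, abs_of_pos hpos, div_lt_iff₀ hpos]
    calc |Φ s' - Φ s - (s' - s) * G s|
        ≤ ((εA / 2) * (Cψ * Mr) + ε / 4) * (s' - s) := hnum
      _ < ε * (s' - s) := by
          have h11 : (εA / 2) * (Cψ * Mr) + ε / 4 < ε := by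
            have h0 : (0:ℝ) < 2 * (Cψ * Mr + 1) := by positivity
            have hq : εA * (2 * (Cψ * Mr + 1)) = ε := by
              rw [hεA_def]; field_simp
            nlinarith [mul_nonneg hCψ0 hMr0, hεA]
          exact mul_lt_mul_of_pos_right h11 hpos
  have hGint : IntervalIntegrable G volume 0 t := by
    apply ContinuousOn.intervalIntegrable
    rwa [Set.uIcc_of_le ht.le]
  have hFTC : ∫ s in (0:ℝ)..t, G s = Φ t - Φ 0 :=
    intervalIntegral.integral_eq_sub_of_hasDeriv_right_of_le ht.le hΦcont hderiv hGint
  have hΦ0 : Φ 0 = 0 := by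
    have : ∀ᵐ x : EuclideanSpace ℝ (Fin d), (1 - Real.exp (-(n 0 x))) * ψ x = 0 := by
      filter_upwards [hzero] with x hx
      simp [hx]
    simpa [Φ] using integral_eq_zero_of_ae this
  have hfin : Φ t = ∫ s in (0:ℝ)..t, G s := by rw [hFTC, hΦ0, sub_zero]
  rw [show (∫ x, (1 - Real.exp (-(n t x))) * ψ x) = Φ t from rfl, hfin]
  apply intervalIntegral.integral_congr
  intro s hs
  rw [Set.uIcc_of_le ht.le] at hs
  simp only [G, hνc_def, hc_eq s hs]
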